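/- Failure amplitude as a quasi-Chebyshev polynomial. Let N be a positive integer, M a subset of Fin N, Π_M the orthogonal projection in ℂ^N onto the span of the standard basis vectors indexed by M, and Π_M^⊥ = I − Π_M. Let |ψ₀⟩ be a unit vector in ℂ^N and set x = ‖Π_M^⊥|ψ₀⟩‖. For real angles α, β define G(α,β) = S₀(β)·S_M(α) with S₀(β) = I − (1 − e^{iβ})|ψ₀⟩⟨ψ₀| and S_M(α) = I − (1 − e^{iα})Π_M. Let l be a positive integer, let (α_k, β_k) for k = 1,…,l be arbitrary real angles, and set |ψ_l⟩ = G(α_l,β_l)⋯G(α_1,β_1)|ψ₀⟩. Define the angles φ_{2k−1} = π − α_k and φ_{2k} = β_k + π for k = 1,…,l, set L = 2l+1, and define a_n : ℝ → ℂ by a_0(x) = 1, a_1(x) = x, and a_{n+1}(x) = x·(1 + e^{−iφ_n})·a_n(x) − e^{−iφ_n}·a_{n−1}(x) for n = 1,…,2l. Then ‖Π_M^⊥|ψ_l⟩‖ = |a_L(x)|. -/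

import Mathlib

open Real

/-- Orthogonal projection `Π_M` onto the span of the standard basis vectors of
`ℂ^N` indexed by `M`. -/
noncomputable def coordProj {N : ℕ} (M : Finset (Fin N)) :
    EuclideanSpace ℂ (Fin N) →ₗ[ℂ] EuclideanSpace ℂ (Fin N) where
  toFun v := WithLp.toLp 2 (fun i => if i ∈ M then v i else 0)
  map_add' x y := by
    ext i
    by_cases h : i ∈ M <;> simp [h, PiLp.add_apply]
  map_smul' c x := by
    ext i
    by_cases h : i ∈ M <;> simp [h, PiLp.smul_apply]

/-- The rank-one orthogonal projection `|ψ⟩⟨ψ|` onto a unit vector `ψ`. -/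
noncomputable def outerSelf {N : ℕ} (ψ : EuclideanSpace ℂ (Fin N)) :
    EuclideanSpace ℂ (Fin N) →ₗ[ℂ] EuclideanSpace ℂ (Fin N) where
  toFun v := (inner ℂ ψ v : ℂ) • ψ
  map_add' x y := by simp [inner_add_right, add_smul]
  map_smul' c x := by simp [inner_smul_right, mul_smul]

/-- `S₀(β) = I − (1 − e^{iβ})|ψ₀⟩⟨ψ₀|`. -/
noncomputable def S0 {N : ℕ} (ψ₀ : EuclideanSpace ℂ (Fin N)) (β : ℝ) :
    EuclideanSpace ℂ (Fin N) →ₗ[ℂ] EuclideanSpace ℂ (Fin N) :=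
  LinearMap.id - (1 - Complex.exp (Complex.I * (β : ℂ))) • outerSelf ψ₀

/-- `S_M(α) = I − (1 − e^{iα})Π_M`. -/
noncomputable def SM {N : ℕ} (M : Finset (Fin N)) (α : ℝ) :
    EuclideanSpace ℂ (Fin N) →ₗ[ℂ] EuclideanSpace ℂ (Fin N) :=
  LinearMap.id - (1 - Complex.exp (Complex.I * (α : ℂ))) • coordProj M

/-- The generalized Grover iteration `G(α,β) = S₀(β)·S_M(α)`. -/
noncomputable def Gop {N : ℕ} (M : Finset (Fin N)) (ψ₀ : EuclideanSpace ℂ (Fin N))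
    (α β : ℝ) : EuclideanSpace ℂ (Fin N) →ₗ[ℂ] EuclideanSpace ℂ (Fin N) :=
  S0 ψ₀ β ∘ₗ SM M α


noncomputable def pqAux (α β : ℕ → ℝ) (x : ℝ) : ℕ → ℂ × ℂ
  | 0 => (1, 1)
  | k + 1 =>
    let p := (pqAux α β x k).1
    let q := (pqAux α β x k).2
    let s := Complex.exp (Complex.I * ((α (k+1) : ℝ) : ℂ)) * (1 - (x:ℂ)^2) * p
        + (x:ℂ)^2 * q
    (Complex.exp (Complex.I * ((α (k+1) : ℝ) : ℂ)) * p
       - (1 - Complex.exp (Complex.I * ((β (k+1) : ℝ) : ℂ))) * s,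
     q - (1 - Complex.exp (Complex.I * ((β (k+1) : ℝ) : ℂ))) * s)

noncomputable def sAux (α β : ℕ → ℝ) (x : ℝ) (k : ℕ) : ℂ :=
  Complex.exp (Complex.I * ((α (k+1) : ℝ) : ℂ)) * (1 - (x:ℂ)^2) * (pqAux α β x k).1
    + (x:ℂ)^2 * (pqAux α β x k).2

lemma pqAux_succ (α β : ℕ → ℝ) (x : ℝ) (k : ℕ) :
    pqAux α β x (k+1) =
      (Complex.exp (Complex.I * ((α (k+1) : ℝ) : ℂ)) * (pqAux α β x k).1
         - (1 - Complex.exp (Complex.I * ((β (k+1) : ℝ) : ℂ))) * sAux α β x k,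
       (pqAux α β x k).2
         - (1 - Complex.exp (Complex.I * ((β (k+1) : ℝ) : ℂ))) * sAux α β x k) := by
  simp [pqAux, sAux]

noncomputable def PhiAux (β : ℕ → ℝ) : ℕ → ℂ
  | 0 => 1
  | k + 1 => PhiAux β k * Complex.exp (-(Complex.I * ((β (k+1) : ℝ) : ℂ)))

lemma PhiAux_abs (β : ℕ → ℝ) (k : ℕ) : ‖PhiAux β k‖ = 1 := by
  induction k with
  | zero => simp [PhiAux]
  | succ k ih => simp [PhiAux, map_mul, ih, Complex.norm_exp]

lemma exp_neg_pi_sub (t : ℝ) :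
    Complex.exp (-(Complex.I * ((π - t : ℝ) : ℂ))) = -Complex.exp (Complex.I * (t : ℂ)) := by
  have h : (-(Complex.I * ((π - t : ℝ) : ℂ))) = Complex.I * (t:ℂ) + -((π:ℂ) * Complex.I) := by
    push_cast; ring
  have h2 : Complex.exp (-((π:ℂ) * Complex.I)) = -1 := by
    rw [Complex.exp_neg, Complex.exp_pi_mul_I]; norm_num
  rw [h, Complex.exp_add, h2]; ring

lemma exp_neg_add_pi (t : ℝ) :
    Complex.exp (-(Complex.I * ((t + π : ℝ) : ℂ))) = -Complex.exp (-(Complex.I * (t : ℂ))) := by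
  have h : (-(Complex.I * ((t + π : ℝ) : ℂ))) = -(Complex.I * (t:ℂ)) + -((π:ℂ) * Complex.I) := by
    push_cast; ring
  have h2 : Complex.exp (-((π:ℂ) * Complex.I)) = -1 := by
    rw [Complex.exp_neg, Complex.exp_pi_mul_I]; norm_num
  rw [h, Complex.exp_add, h2]; ring

theorem failure_amplitude_eq_quasi_chebyshev
    (N : ℕ) (hN : 0 < N) (M : Finset (Fin N))
    (ψ₀ : EuclideanSpace ℂ (Fin N)) (hψ₀ : ‖ψ₀‖ = 1)
    (l : ℕ) (hl : 0 < l) (α β : ℕ → ℝ)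
    (ψ : ℕ → EuclideanSpace ℂ (Fin N))
    (hψ0 : ψ 0 = ψ₀)
    (hψstep : ∀ k : ℕ, k < l → ψ (k + 1) = Gop M ψ₀ (α (k + 1)) (β (k + 1)) (ψ k))
    (x : ℝ) (hx : x = ‖((LinearMap.id - coordProj M : EuclideanSpace ℂ (Fin N) →ₗ[ℂ] EuclideanSpace ℂ (Fin N)) ψ₀)‖)
    (φ : ℕ → ℝ)
    (hφodd : ∀ k : ℕ, 1 ≤ k → k ≤ l → φ (2 * k - 1) = π - α k)
    (hφeven : ∀ k : ℕ, 1 ≤ k → k ≤ l → φ (2 * k) = β k + π)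
    (a : ℕ → ℝ → ℂ)
    (ha0 : ∀ y : ℝ, a 0 y = 1)
    (ha1 : ∀ y : ℝ, a 1 y = (y : ℂ))
    (harec : ∀ n : ℕ, 1 ≤ n → n ≤ 2 * l → ∀ y : ℝ,
      a (n + 1) y = (y : ℂ) * (1 + Complex.exp (-(Complex.I * ((φ n : ℝ) : ℂ)))) * a n y
        - Complex.exp (-(Complex.I * ((φ n : ℝ) : ℂ))) * a (n - 1) y) :
    ‖((LinearMap.id - coordProj M : EuclideanSpace ℂ (Fin N) →ₗ[ℂ] EuclideanSpace ℂ (Fin N)) (ψ l))‖ = ‖a (2 * l + 1) x‖ := by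
  set g : EuclideanSpace ℂ (Fin N) := coordProj M ψ₀ with hg
  set b : EuclideanSpace ℂ (Fin N) := ψ₀ - g with hb
  have hψgb : ψ₀ = g + b := by rw [hb]; abel
  have hPg : coordProj M g = g := by
    rw [hg]
    ext i
    by_cases h : i ∈ M <;> simp [coordProj, h]
  have hPb : coordProj M b = 0 := by
    rw [hb, map_sub, ← hg, hPg, sub_self]
  have hbg : (inner ℂ b g : ℂ) = 0 := by
    rw [PiLp.inner_apply]
    apply Finset.sum_eq_zero
    intro i _
    by_cases h : i ∈ M <;> simp [hb, hg, coordProj, PiLp.sub_apply, h]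
  have hgb : (inner ℂ g b : ℂ) = 0 := by
    rw [← inner_conj_symm, hbg, map_zero]
  have hbnorm : ‖b‖ = x := by
    rw [hx]
    congr 1
  have hxnn : 0 ≤ x := by rw [← hbnorm]; exact norm_nonneg _
  have hbb : (inner ℂ ψ₀ b : ℂ) = (x:ℂ)^2 := by
    rw [hψgb, inner_add_left, hgb, zero_add, inner_self_eq_norm_sq_to_K, hbnorm]
    norm_cast
  have hnormg : ‖g‖^2 = 1 - x^2 := by
    have h1 : ‖ψ₀‖ * ‖ψ₀‖ = ‖g‖ * ‖g‖ + ‖b‖ * ‖b‖ := by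
      rw [hψgb]
      exact norm_add_sq_eq_norm_sq_add_norm_sq_of_inner_eq_zero g b hgb
    rw [hψ₀, hbnorm] at h1
    nlinarith
  have hgg : (inner ℂ ψ₀ g : ℂ) = 1 - (x:ℂ)^2 := by
    rw [hψgb, inner_add_left, hbg, add_zero, inner_self_eq_norm_sq_to_K]
    norm_cast
    exact congrArg _ hnormg
  -- the state stays in the plane spanned by g and b
  have key : ∀ k, k ≤ l → ψ k = (pqAux α β x k).1 • g + (pqAux α β x k).2 • b := by
    intro k
    induction k with
    | zero =>
      intro _
      simp only [pqAux, one_smul, hψ0]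
      rw [hψgb]
    | succ k ih =>
      intro hk
      have hk' : k < l := by omega
      rw [hψstep k hk', ih (le_of_lt hk'), pqAux_succ]
      simp only [Gop, S0, SM, outerSelf, LinearMap.coe_comp, Function.comp_apply,
        LinearMap.sub_apply, LinearMap.id_apply, LinearMap.smul_apply,
        LinearMap.coe_mk, AddHom.coe_mk, map_add, LinearMap.map_smul, hPg, hPb,
        smul_zero, add_zero, inner_sub_right, inner_add_right, inner_smul_right, inner_zero_right,
        hgg, hbb]
      rw [hψgb]
      simp only [sAux]
      module
  have hlast : ((LinearMap.id - coordProj M : EuclideanSpace ℂ (Fin N) →ₗ[ℂ] EuclideanSpace ℂ (Fin N)) (ψ l)) = (pqAux α β x l).2 • b := by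
    rw [key l le_rfl]
    simp only [LinearMap.sub_apply, LinearMap.id_apply, map_add, LinearMap.map_smul,
      hPg, hPb, smul_zero, add_zero]
    module
  -- algebraic steps for the quasi-Chebyshev recursion
  have oddstep : ∀ k, k + 1 ≤ l →
      a (2*k+1) x = PhiAux β k * x * (pqAux α β x k).2 →
      a (2*k+2) x = PhiAux β k * sAux α β x k →
      a (2*k+3) x = PhiAux β (k+1) * x * (pqAux α β x (k+1)).2 := by
    intro k hk hodd heven
    have hr := harec (2*k+2) (by omega) (by omega) x
    have hφ : φ (2*k+2) = β (k+1) + π := by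
      have h := hφeven (k+1) (by omega) (by omega)
      rw [show 2*(k+1) = 2*k+2 from by ring] at h
      exact h
    rw [hφ, exp_neg_add_pi, show 2*k+2+1 = 2*k+3 from by ring,
      show 2*k+2-1 = 2*k+1 from by omega, hodd, heven] at hr
    rw [hr]
    simp only [PhiAux, pqAux_succ, Complex.exp_neg]
    field_simp
    ring
  have evenstep : ∀ k, k + 2 ≤ l →
      a (2*k+3) x = PhiAux β (k+1) * x * (pqAux α β x (k+1)).2 →
      a (2*k+2) x = PhiAux β k * sAux α β x k →
      a (2*k+4) x = PhiAux β (k+1) * sAux α β x (k+1) := by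
    intro k hk hodd heven
    have hr := harec (2*k+3) (by omega) (by omega) x
    have hφ : φ (2*k+3) = π - α (k+2) := by
      have h := hφodd (k+2) (by omega) (by omega)
      rw [show 2*(k+2)-1 = 2*k+3 from by omega] at h
      exact h
    rw [hφ, exp_neg_pi_sub, show 2*k+3+1 = 2*k+4 from by ring,
      show 2*k+3-1 = 2*k+2 from by omega, hodd, heven] at hr
    rw [hr]
    simp only [PhiAux, pqAux_succ, sAux, Complex.exp_neg]
    field_simp
    ring
  have alg : ∀ k, k + 1 ≤ l →
      a (2*k+1) x = PhiAux β k * x * (pqAux α β x k).2 ∧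
      a (2*k+2) x = PhiAux β k * sAux α β x k := by
    intro k
    induction k with
    | zero =>
      intro _
      constructor
      · simp [ha1, PhiAux, pqAux]
      · have hr := harec 1 le_rfl (by omega) x
        have hφ : φ 1 = π - α 1 := by
          have h := hφodd 1 le_rfl (by omega)
          norm_num at h
          exact h
        rw [hφ, exp_neg_pi_sub] at hr
        norm_num [ha0, ha1] at hr
        rw [show (2:ℕ)*0+2 = 2 from by norm_num, hr]
        simp only [PhiAux, sAux, pqAux]
        ring
    | succ k ih =>
      intro hk
      obtain ⟨hodd, heven⟩ := ih (by omega)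
      have h3 := oddstep k (by omega) hodd heven
      refine ⟨?_, ?_⟩
      · rw [show 2*(k+1)+1 = 2*k+3 from by ring]
        exact h3
      · rw [show 2*(k+1)+2 = 2*k+4 from by ring]
        exact evenstep k hk h3 heven
  obtain ⟨m, rfl⟩ : ∃ m, l = m + 1 := ⟨l - 1, by omega⟩
  obtain ⟨hodd, heven⟩ := alg m le_rfl
  have hfin := oddstep m le_rfl hodd heven
  rw [hlast, norm_smul, show 2*(m+1)+1 = 2*m+3 from by ring, hfin, norm_mul, norm_mul,
    PhiAux_abs, one_mul, Complex.norm_real, Real.norm_of_nonneg hxnn, hbnorm]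
  exact mul_comm _ _
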